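/- arXiv:2303.04359 — 2 statements merged into one kernel-verified Lean document; each statement's English description precedes it below -/
import Mathlib

section
/- Let K ⊆ ℝ² be a convex body of constant width 1, with support function h(θ) = max_{x∈K} x·u(θ) satisfying h(θ) + h(θ+π) = 1 for all θ. Then h is continuously differentiable with Lipschitz continuous derivative (h ∈ C^{1,1}(S¹)), and 0 ≤ h''(θ) + h(θ) ≤ 1 at almost every θ ∈ ℝ (h is twice differentiable almost everywhere). -/
open Real MeasureTheory

/-- The direction vector `u θ = (cos θ, sin θ)` in the Euclidean plane. -/
noncomputable def u (θ : ℝ) : EuclideanSpace ℝ (Fin 2) := WithLp.toLp 2 ![Real.cos θ, Real.sin θ]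

/-- `h` is the support function of `K`: for every direction `θ`,
`h θ` is the maximum of `x · u θ` over `x ∈ K`. -/
def IsSupportFn (K : Set (EuclideanSpace ℝ (Fin 2))) (h : ℝ → ℝ) : Prop :=
  ∀ θ : ℝ, IsGreatest ((fun x => (inner ℝ x (u θ) : ℝ)) '' K) (h θ)

section Aux

open Set Filter Topology

lemma u_norm (θ : ℝ) : ‖u θ‖ = 1 := by
  rw [EuclideanSpace.norm_eq]
  rw [show (1:ℝ) = Real.sqrt 1 from (Real.sqrt_one).symm]
  congr 1
  simp [u, Fin.sum_univ_two]

lemma u_add (θ t : ℝ) : u (θ + t) + u (θ - t) = (2 * Real.cos t) • u θ := by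
  ext i
  fin_cases i <;>
    simp [u, Real.cos_add, Real.cos_sub, Real.sin_add, Real.sin_sub] <;> ring

lemma u_dist (θ φ : ℝ) : ‖u θ - u φ‖ ≤ |θ - φ| := by
  rw [EuclideanSpace.norm_eq, ← Real.sqrt_sq_eq_abs]
  apply Real.sqrt_le_sqrt
  simp only [Fin.sum_univ_two]
  have h0 : (u θ - u φ) 0 = Real.cos θ - Real.cos φ := by simp [u]
  have h1 : (u θ - u φ) 1 = Real.sin θ - Real.sin φ := by simp [u]
  rw [h0, h1]
  simp only [Real.norm_eq_abs, sq_abs]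
  nlinarith [Real.sin_sq_add_cos_sq θ, Real.sin_sq_add_cos_sq φ, Real.cos_sub θ φ,
    Real.one_sub_sq_div_two_le_cos (x := θ - φ)]

lemma key_line {f : ℝ → ℝ} (hc : Continuous f)
    (hm : ∀ x y : ℝ, f ((x + y) / 2) ≤ (f x + f y) / 2)
    {x y : ℝ} (hxy : x < y) {t : ℝ} (ht : t ∈ Icc x y) :
    f t ≤ f x + (t - x) * (f y - f x) / (y - x) := by
  have hyx : y - x ≠ 0 := by intro hh; simp only [sub_eq_zero] at hh; exact hxy.ne' hh
  set l : ℝ → ℝ := fun s => f x + (s - x) * (f y - f x) / (y - x) with hl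
  set φ : ℝ → ℝ := fun s => f s - l s with hφ
  have hφc : Continuous φ := by
    apply hc.sub
    apply continuous_const.add
    exact (continuous_id.sub continuous_const).mul continuous_const |>.div_const _
  have hlmid : ∀ s t : ℝ, l ((s + t) / 2) = (l s + l t) / 2 := by
    intro s t; simp only [hl]; ring
  have hφm : ∀ s t : ℝ, φ ((s + t) / 2) ≤ (φ s + φ t) / 2 := by
    intro s t
    have h1 := hm s t
    have h2 := hlmid s t
    simp only [hφ]
    rw [h2]; linarith
  have hφx : φ x = 0 := by simp [hφ, hl]
  have hφy : φ y = 0 := by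
    simp only [hφ, hl]
    field_simp
    ring
  suffices hle : φ t ≤ 0 by
    simp only [hφ, hl] at hle; linarith
  by_contra hpos
  push_neg at hpos
  clear_value l φ
  obtain ⟨c₀, hc₀, hmax⟩ := (isCompact_Icc (a := x) (b := y)).exists_isMaxOn
    (nonempty_Icc.2 hxy.le) (hφc.continuousOn)
  have hmpos : 0 < φ c₀ := lt_of_lt_of_le hpos (hmax ht)
  set S : Set ℝ := {s ∈ Icc x y | φ s = φ c₀} with hS
  have hSne : S.Nonempty := ⟨c₀, hc₀, rfl⟩
  have hSclosed : IsClosed S := by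
    have : S = Icc x y ∩ φ ⁻¹' {φ c₀} := by ext s; simp [hS]
    rw [this]
    exact isClosed_Icc.inter (isClosed_singleton.preimage hφc)
  have hSbdd : BddAbove S := BddAbove.mono (fun s hs => hs.1) bddAbove_Icc
  obtain ⟨hcI, hcm⟩ : sSup S ∈ S := hSclosed.csSup_mem hSne hSbdd
  set c := sSup S with hc
  have hcx : x < c := by
    rcases eq_or_lt_of_le hcI.1 with h | h
    · exfalso; rw [← h, hφx] at hcm; linarith
    · exact h
  have hcy : c < y := by
    rcases eq_or_lt_of_le hcI.2 with h | h
    · exfalso; rw [h, hφy] at hcm; linarith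
    · exact h
  set δ := min (c - x) (y - c) with hδ
  have hδ1 : δ ≤ c - x := min_le_left _ _
  have hδ2 : δ ≤ y - c := min_le_right _ _
  have hδpos : 0 < δ := lt_min (by linarith) (by linarith)
  have h1 : c - δ ∈ Icc x y := ⟨by linarith, by linarith⟩
  have h2 : c + δ ∈ Icc x y := ⟨by linarith, by linarith⟩
  have hup : φ (c + δ) < φ c₀ := by
    have hle : φ (c + δ) ≤ φ c₀ := hmax h2
    rcases lt_or_eq_of_le hle with h | h
    · exact h
    · exfalso
      have hmem : c + δ ∈ S := ⟨h2, h⟩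
      have := le_csSup hSbdd hmem
      rw [← hc] at this
      linarith
  have hlow : φ (c - δ) ≤ φ c₀ := hmax h1
  have hmid := hφm (c - δ) (c + δ)
  have hcc : ((c - δ) + (c + δ)) / 2 = c := by ring
  rw [hcc, hcm] at hmid
  linarith

lemma midpoint_convexOn {f : ℝ → ℝ} (hc : Continuous f)
    (hm : ∀ x y : ℝ, f ((x + y) / 2) ≤ (f x + f y) / 2) :
    ConvexOn ℝ Set.univ f := by
  have main : ∀ x y a b : ℝ, x < y → 0 ≤ a → 0 ≤ b → a + b = 1 →
      f (a * x + b * y) ≤ a * f x + b * f y := by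
    intro x y a b hxy ha hb hab
    have hyx : (0:ℝ) < y - x := by linarith
    have hxe : a * x + b * y - x = b * (y - x) := by linear_combination x * hab
    have hye : y - (a * x + b * y) = a * (y - x) := by linear_combination (-y) * hab
    have ht : a * x + b * y ∈ Icc x y := by
      constructor
      · nlinarith [mul_nonneg hb hyx.le]
      · nlinarith [mul_nonneg ha hyx.le]
    have hkey := key_line hc hm hxy ht
    rw [hxe] at hkey
    have : b * (y - x) * (f y - f x) / (y - x) = b * (f y - f x) := by
      field_simp
    rw [this] at hkey
    calc f (a * x + b * y) ≤ f x + b * (f y - f x) := hkey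
      _ = a * f x + b * f y := by linear_combination f x * hab.symm
  refine ⟨convex_univ, ?_⟩
  intro x _ y _ a b ha hb hab
  simp only [smul_eq_mul]
  rcases lt_trichotomy x y with hxy | hxy | hxy
  · exact main x y a b hxy ha hb hab
  · subst hxy
    have : a * x + b * x = x := by linear_combination x * hab
    rw [this]
    have : a * f x + b * f x = f x := by linear_combination f x * hab
    rw [this]
  · have := main y x b a hxy hb ha (by linarith)
    calc f (a * x + b * y) = f (b * y + a * x) := by ring_nf
      _ ≤ b * f y + a * f x := this
      _ = a * f x + b * f y := by ring

lemma c11_of_two_convex {h : ℝ → ℝ} {C : ℝ} (hC : 0 < C)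
    (hf : ConvexOn ℝ Set.univ (fun x => h x + C / 2 * x ^ 2))
    (hg : ConvexOn ℝ Set.univ (fun x => C / 2 * x ^ 2 - h x)) :
    Differentiable ℝ h ∧ LipschitzWith C.toNNReal (deriv h) := by
  set F : ℝ → ℝ := fun x => h x + C / 2 * x ^ 2 with hF
  set G2 : ℝ → ℝ := fun x => C / 2 * x ^ 2 - h x with hG2
  have hslopeF : ∀ θ s : ℝ, s ≠ θ → slope F θ s = slope h θ s + C / 2 * (θ + s) := by
    intro θ s hs
    have hd : s - θ ≠ 0 := sub_ne_zero.2 hs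
    simp only [slope_def_field, hF]
    field_simp
    ring
  have hslopeG : ∀ θ s : ℝ, s ≠ θ → slope G2 θ s = C / 2 * (θ + s) - slope h θ s := by
    intro θ s hs
    have hd : s - θ ≠ 0 := sub_ne_zero.2 hs
    simp only [slope_def_field, hG2]
    field_simp
    ring
  have hkey : ∀ θ : ℝ, ∀ s ∈ ({θ}ᶜ : Set ℝ), ∀ t ∈ ({θ}ᶜ : Set ℝ),
      |slope h θ s - slope h θ t| ≤ C / 2 * |s - t| := by
    intro θ s hs t ht
    wlog hst : s ≤ t generalizing s t
    · rw [abs_sub_comm, abs_sub_comm s t]; exact this t ht s hs (by linarith)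
    have hs' : s ∈ (Set.univ \ {θ} : Set ℝ) := ⟨trivial, hs⟩
    have ht' : t ∈ (Set.univ \ {θ} : Set ℝ) := ⟨trivial, ht⟩
    have h1 := hf.slope_mono (Set.mem_univ θ) hs' ht' hst
    have h2 := hg.slope_mono (Set.mem_univ θ) hs' ht' hst
    rw [hslopeF θ s hs, hslopeF θ t ht] at h1
    rw [hslopeG θ s hs, hslopeG θ t ht] at h2
    rw [abs_sub_le_iff, abs_sub_comm, abs_of_nonneg (by linarith : (0:ℝ) ≤ t - s)]
    constructor <;> nlinarith
  have hdiff : ∀ θ : ℝ, ∃ d : ℝ, HasDerivAt h d θ := by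
    intro θ
    have hlip : LipschitzOnWith (C / 2).toNNReal (slope h θ) ({θ}ᶜ) := by
      apply LipschitzOnWith.of_dist_le_mul
      intro s hs t ht
      rw [Real.dist_eq, Real.dist_eq]
      calc |slope h θ s - slope h θ t| ≤ C / 2 * |s - t| := hkey θ s hs t ht
        _ = (C / 2).toNNReal * |s - t| := by
            rw [Real.coe_toNNReal _ (by positivity)]
    obtain ⟨G, hGlip, hGeq⟩ := hlip.extend_real
    refine ⟨G θ, ?_⟩
    rw [hasDerivAt_iff_tendsto_slope]
    have hG : Tendsto G (𝓝[≠] θ) (𝓝 (G θ)) :=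
      (hGlip.continuous.tendsto θ).mono_left nhdsWithin_le_nhds
    apply hG.congr'
    filter_upwards [eventually_mem_nhdsWithin] with s hs
    exact (hGeq hs).symm
  have hDiff : Differentiable ℝ h := fun θ => (hdiff θ).choose_spec.differentiableAt
  refine ⟨hDiff, ?_⟩
  have hFd : ∀ x : ℝ, HasDerivAt F (deriv h x + C * x) x := by
    intro x
    have h1 : HasDerivAt (fun y : ℝ => C / 2 * y ^ 2) (C / 2 * (2 * x)) x := by
      simpa using (hasDerivAt_pow 2 x).const_mul (C / 2)
    have := ((hDiff x).hasDerivAt).add h1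
    exact this.congr_deriv (by ring)
  have hGd : ∀ x : ℝ, HasDerivAt G2 (C * x - deriv h x) x := by
    intro x
    have h1 : HasDerivAt (fun y : ℝ => C / 2 * y ^ 2) (C / 2 * (2 * x)) x := by
      simpa using (hasDerivAt_pow 2 x).const_mul (C / 2)
    have := h1.sub ((hDiff x).hasDerivAt)
    exact this.congr_deriv (by ring)
  have hFmono : Monotone (deriv F) := by
    rw [← monotoneOn_univ]
    exact hf.monotoneOn_deriv (fun x _ => (hFd x).differentiableAt)
  have hGmono : Monotone (deriv G2) := by
    rw [← monotoneOn_univ]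
    exact hg.monotoneOn_deriv (fun x _ => (hGd x).differentiableAt)
  have hFderiv : ∀ x, deriv F x = deriv h x + C * x := fun x => (hFd x).deriv
  have hGderiv : ∀ x, deriv G2 x = C * x - deriv h x := fun x => (hGd x).deriv
  apply LipschitzWith.of_dist_le_mul
  intro s t
  rw [Real.dist_eq, Real.dist_eq, Real.coe_toNNReal _ hC.le]
  wlog hst : s ≤ t generalizing s t
  · rw [abs_sub_comm, abs_sub_comm s t]; exact this t s (by linarith)
  have h1 := hFmono hst
  have h2 := hGmono hst
  rw [hFderiv, hFderiv] at h1
  rw [hGderiv, hGderiv] at h2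
  rw [abs_sub_le_iff, abs_sub_comm, abs_of_nonneg (by linarith : (0:ℝ) ≤ t - s)]
  constructor <;> nlinarith

lemma tendsto_one_sub_cos_div_sq :
    Tendsto (fun t : ℝ => (1 - Real.cos t) / t ^ 2) (𝓝[≠] (0:ℝ)) (𝓝 (1/2)) := by
  have hsin : Tendsto (fun t : ℝ => Real.sin t / t) (𝓝[≠] (0:ℝ)) (𝓝 1) := by
    have := (Real.hasDerivAt_sin 0)
    rw [hasDerivAt_iff_tendsto_slope] at this
    simp only [Real.cos_zero] at this
    apply this.congr
    intro t
    simp [slope_def_field]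
  have hhalf : Tendsto (fun t : ℝ => t / 2) (𝓝[≠] (0:ℝ)) (𝓝[≠] (0:ℝ)) := by
    apply tendsto_nhdsWithin_of_tendsto_nhds_of_eventually_within
    · have : Tendsto (fun t : ℝ => t / 2) (𝓝 (0:ℝ)) (𝓝 ((0:ℝ)/2)) :=
        (continuous_id.div_const 2).tendsto 0
      simpa using this.mono_left nhdsWithin_le_nhds
    · filter_upwards [eventually_mem_nhdsWithin] with t ht
      simp only [Set.mem_compl_iff, Set.mem_singleton_iff] at ht ⊢
      intro hh; exact ht (by linarith)
  have hcomp : Tendsto (fun t : ℝ => Real.sin (t/2) / (t/2)) (𝓝[≠] (0:ℝ)) (𝓝 1) :=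
    hsin.comp hhalf
  have hsq : Tendsto (fun t : ℝ => (Real.sin (t/2) / (t/2))^2 / 2) (𝓝[≠] (0:ℝ)) (𝓝 (1/2)) := by
    have := (hcomp.mul hcomp).div_const 2
    simp only [mul_one] at this
    apply this.congr
    intro t; ring
  apply hsq.congr'
  filter_upwards [eventually_mem_nhdsWithin] with t ht
  simp only [Set.mem_compl_iff, Set.mem_singleton_iff] at ht
  have h2 : Real.cos t = 1 - 2 * Real.sin (t/2)^2 := by
    have := Real.cos_two_mul (t/2)
    have hs := Real.sin_sq_add_cos_sq (t/2)
    rw [show 2 * (t/2) = t by ring] at this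
    linarith
  rw [h2]
  have ht2 : t ≠ 0 := ht
  field_simp
  ring

lemma le_of_forall_pos_le_add' {a b : ℝ} (H : ∀ ε : ℝ, 0 < ε → a ≤ b + ε) : a ≤ b := by
  by_contra hm
  push_neg at hm
  have := H ((a - b)/2) (by linarith)
  linarith

end Aux

/-- The support function of a convex body of constant width 1 is `C^{1,1}(S¹)`:
`2π`-periodic, continuously differentiable with Lipschitz derivative; moreover `h` is
twice differentiable a.e. with `0 ≤ h'' + h ≤ 1` a.e. -/
theorem constant_width_support_function_C11
    (K : Set (EuclideanSpace ℝ (Fin 2))) (h : ℝ → ℝ)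
    (hne : K.Nonempty) (hcomp : IsCompact K) (hconv : Convex ℝ K)
    (hsupp : IsSupportFn K h)
    (hwidth : ∀ θ : ℝ, h θ + h (θ + π) = 1) :
    Function.Periodic h (2 * π) ∧ ContDiff ℝ 1 h ∧ (∃ L : NNReal, LipschitzWith L (deriv h)) ∧
    (∀ᵐ θ : ℝ, DifferentiableAt ℝ (deriv h) θ ∧
      0 ≤ deriv (deriv h) θ + h θ ∧ deriv (deriv h) θ + h θ ≤ 1) := by
  obtain ⟨M0, hM0⟩ := hcomp.isBounded.subset_closedBall 0
  set M := max M0 0 with hMdef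
  have hMnn : (0:ℝ) ≤ M := le_max_right _ _
  have hnorm : ∀ x ∈ K, ‖x‖ ≤ M := by
    intro x hx
    have := hM0 hx
    rw [Metric.mem_closedBall, dist_zero_right] at this
    exact this.trans (le_max_left _ _)
  have hub : ∀ θ : ℝ, ∀ x ∈ K, (inner ℝ x (u θ) : ℝ) ≤ h θ := by
    intro θ x hx
    exact (hsupp θ).2 ⟨x, hx, rfl⟩
  have hmem : ∀ θ : ℝ, ∃ x ∈ K, (inner ℝ x (u θ) : ℝ) = h θ := by
    intro θ
    obtain ⟨x, hx, hxe⟩ := (hsupp θ).1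
    exact ⟨x, hx, hxe⟩
  have habs : ∀ θ : ℝ, |h θ| ≤ M := by
    intro θ
    obtain ⟨x, hxK, hxe⟩ := hmem θ
    rw [← hxe]
    calc |(inner ℝ x (u θ) : ℝ)| ≤ ‖x‖ * ‖u θ‖ := abs_real_inner_le_norm x (u θ)
      _ = ‖x‖ := by rw [u_norm]; ring
      _ ≤ M := hnorm x hxK
  have hcont : Continuous h := by
    have hl1 : ∀ θ φ : ℝ, h θ - h φ ≤ M * |θ - φ| := by
      intro θ φ
      obtain ⟨x, hxK, hxe⟩ := hmem θ
      have h1 : (inner ℝ x (u φ) : ℝ) ≤ h φ := hub φ x hxK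
      have h2 : (inner ℝ x (u θ) : ℝ) - inner ℝ x (u φ) = inner ℝ x (u θ - u φ) := by
        rw [inner_sub_right]
      have h3 : (inner ℝ x (u θ - u φ) : ℝ) ≤ ‖x‖ * ‖u θ - u φ‖ := real_inner_le_norm _ _
      have h4 : ‖x‖ * ‖u θ - u φ‖ ≤ M * |θ - φ| :=
        mul_le_mul (hnorm x hxK) (u_dist θ φ) (norm_nonneg _) hMnn
      linarith [h2 ▸ h3]
    have : LipschitzWith M.toNNReal h := by
      apply LipschitzWith.of_dist_le_mul
      intro θ φ
      rw [Real.dist_eq, Real.dist_eq, Real.coe_toNNReal _ hMnn, abs_sub_le_iff]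
      exact ⟨hl1 θ φ, by rw [abs_sub_comm]; exact hl1 φ θ⟩
    exact this.continuous
  have hlow : ∀ θ t : ℝ, 2 * Real.cos t * h θ ≤ h (θ + t) + h (θ - t) := by
    intro θ t
    obtain ⟨x, hxK, hxe⟩ := hmem θ
    have e : (inner ℝ x (u (θ + t)) : ℝ) + inner ℝ x (u (θ - t)) = 2 * Real.cos t * h θ := by
      rw [← inner_add_right, u_add, real_inner_smul_right, hxe]
    have e1 := hub (θ + t) x hxK
    have e2 := hub (θ - t) x hxK
    linarith
  have hup : ∀ θ t : ℝ, h (θ + t) + h (θ - t) ≤ 2 * Real.cos t * h θ + 2 * (1 - Real.cos t) := by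
    intro θ t
    have w0 := hwidth θ
    have w1 := hwidth (θ + t)
    have w2 := hwidth (θ - t)
    have hl := hlow (θ + π) t
    rw [show θ + π + t = θ + t + π by ring, show θ + π - t = θ - t + π by ring] at hl
    have e0 : h (θ + π) = 1 - h θ := by linarith
    have e1 : h (θ + t + π) = 1 - h (θ + t) := by linarith
    have e2 : h (θ - t + π) = 1 - h (θ - t) := by linarith
    rw [e0, e1, e2] at hl
    nlinarith [hl]
  set C : ℝ := M + 1 with hCdef
  have hCpos : (0:ℝ) < C := by linarith
  -- midpoint convexity of h + C/2 x² and C/2 x² - h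
  have hcos1 : ∀ t : ℝ, 0 ≤ 1 - Real.cos t := fun t => by linarith [Real.cos_le_one t]
  have hcos2 : ∀ t : ℝ, 1 - Real.cos t ≤ t ^ 2 / 2 := fun t => by
    linarith [Real.one_sub_sq_div_two_le_cos (x := t)]
  have hmidF : ∀ x y : ℝ, (fun x => h x + C / 2 * x ^ 2) ((x + y) / 2) ≤
      ((fun x => h x + C / 2 * x ^ 2) x + (fun x => h x + C / 2 * x ^ 2) y) / 2 := by
    intro x y
    simp only
    set m := (x + y) / 2 with hm
    set t := (x - y) / 2 with ht
    have e1 : m + t = x := by rw [hm, ht]; ring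
    have e2 : m - t = y := by rw [hm, ht]; ring
    have hl := hlow m t
    rw [e1, e2] at hl
    have hb := (abs_le.mp (habs m))
    have k1 : 0 ≤ (1 - Real.cos t) * (M - h m) := mul_nonneg (hcos1 t) (by linarith [hb.2])
    have k2 : 0 ≤ M * (t ^ 2 / 2 - (1 - Real.cos t)) := mul_nonneg hMnn (by linarith [hcos2 t])
    have hx2 : x ^ 2 + y ^ 2 = 2 * m ^ 2 + 2 * t ^ 2 := by rw [hm, ht]; ring
    nlinarith [sq_nonneg t]
  have hmidG : ∀ x y : ℝ, (fun x => C / 2 * x ^ 2 - h x) ((x + y) / 2) ≤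
      ((fun x => C / 2 * x ^ 2 - h x) x + (fun x => C / 2 * x ^ 2 - h x) y) / 2 := by
    intro x y
    simp only
    set m := (x + y) / 2 with hm
    set t := (x - y) / 2 with ht
    have e1 : m + t = x := by rw [hm, ht]; ring
    have e2 : m - t = y := by rw [hm, ht]; ring
    have hu2 := hup m t
    rw [e1, e2] at hu2
    have hb := (abs_le.mp (habs m))
    have k1 : 0 ≤ (1 - Real.cos t) * (M + h m) := mul_nonneg (hcos1 t) (by linarith [hb.1])
    have k2 : 0 ≤ (1 + M) * (t ^ 2 / 2 - (1 - Real.cos t)) :=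
      mul_nonneg (by linarith) (by linarith [hcos2 t])
    have hx2 : x ^ 2 + y ^ 2 = 2 * m ^ 2 + 2 * t ^ 2 := by rw [hm, ht]; ring
    nlinarith [sq_nonneg t]
  have hfconv : ConvexOn ℝ Set.univ (fun x => h x + C / 2 * x ^ 2) :=
    midpoint_convexOn (hcont.add (continuous_const.mul (continuous_pow 2))) hmidF
  have hgconv : ConvexOn ℝ Set.univ (fun x => C / 2 * x ^ 2 - h x) :=
    midpoint_convexOn ((continuous_const.mul (continuous_pow 2)).sub hcont) hmidG
  obtain ⟨hDiff, hLip⟩ := c11_of_two_convex hCpos hfconv hgconv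
  have hper : Function.Periodic h (2 * π) := by
    intro x
    have huu : u (x + 2 * π) = u x := by
      ext i
      fin_cases i <;> simp [u, Real.cos_add_two_pi, Real.sin_add_two_pi]
    have h1 := hsupp (x + 2 * π)
    rw [huu] at h1
    exact h1.unique (hsupp x)
  refine ⟨hper, contDiff_one_iff_deriv.mpr ⟨hDiff, hLip.continuous⟩, ⟨C.toNNReal, hLip⟩, ?_⟩
  filter_upwards [hLip.ae_differentiableAt] with θ hθd
  set a := deriv (deriv h) θ with hadef
  have ha : HasDerivAt (deriv h) a θ := hθd.hasDerivAt
  have hQ : ∀ ε : ℝ, 0 < ε → ∃ δ : ℝ, 0 < δ ∧ ∀ t ∈ Set.Ioo (0:ℝ) δ,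
      (a - 2*ε)*t^2 ≤ h (θ+t) + h (θ-t) - 2*h θ ∧
      h (θ+t) + h (θ-t) - 2*h θ ≤ (a + 2*ε)*t^2 := by
    intro ε hε
    rw [hasDerivAt_iff_isLittleO_nhds_zero] at ha
    have hev := (Asymptotics.isLittleO_iff.mp ha) hε
    rw [Metric.eventually_nhds_iff] at hev
    obtain ⟨δ, hδpos, hδ⟩ := hev
    have hest : ∀ s : ℝ, |s| < δ → |deriv h (θ + s) - deriv h θ - s * a| ≤ ε * |s| := by
      intro s hs
      have := hδ (show dist s 0 < δ by rwa [Real.dist_eq, sub_zero])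
      simpa [Real.norm_eq_abs, smul_eq_mul] using this
    refine ⟨δ, hδpos, fun t htI => ?_⟩
    obtain ⟨ht0, htδ⟩ := htI
    have p1 : ∀ s : ℝ, HasDerivAt (fun s : ℝ => h (θ + s)) (deriv h (θ + s)) s := by
      intro s
      have := ((hDiff (θ + s)).hasDerivAt).comp s ((hasDerivAt_id s).const_add θ)
      exact this.congr_deriv (by simp)
    have p2 : ∀ s : ℝ, HasDerivAt (fun s : ℝ => h (θ - s)) (-deriv h (θ - s)) s := by
      intro s
      have := ((hDiff (θ - s)).hasDerivAt).comp s ((hasDerivAt_id s).neg.const_add θ)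
      simp only [sub_eq_add_neg]
      exact this.congr_deriv (by simp [sub_eq_add_neg])
    have hestpair : ∀ s : ℝ, 0 < s → s < t →
        deriv h θ + s * a - ε * s ≤ deriv h (θ + s) ∧
        deriv h (θ + s) ≤ deriv h θ + s * a + ε * s ∧
        deriv h θ - s * a - ε * s ≤ deriv h (θ - s) ∧
        deriv h (θ - s) ≤ deriv h θ - s * a + ε * s := by
      intro s hs0 hst
      have habs1 : |s| < δ := by rw [abs_of_pos hs0]; linarith
      have e1 := hest s habs1
      have e2 := hest (-s) (by rwa [abs_neg])
      rw [abs_neg] at e2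
      rw [abs_of_pos hs0] at e1 e2
      rw [show θ + -s = θ - s by ring] at e2
      have e1' := abs_le.mp e1
      have e2' := abs_le.mp e2
      constructor
      · linarith [e1'.1]
      refine ⟨by linarith [e1'.2], ?_, ?_⟩
      · linarith [e2'.1]
      · linarith [e2'.2]
    constructor
    · set r2 : ℝ → ℝ := fun s => h (θ+s) + h (θ-s) - 2*h θ - (a - 2*ε)*s^2 with hr2def
      have hr2d : ∀ s : ℝ, HasDerivAt r2
          (deriv h (θ+s) + -deriv h (θ-s) - (a - 2*ε)*(2*s)) s := by
        intro s
        have p3 : HasDerivAt (fun s : ℝ => (a - 2*ε)*s^2) ((a - 2*ε)*(2*s)) s := by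
          simpa using (hasDerivAt_pow 2 s).const_mul (a - 2*ε)
        exact (((p1 s).add (p2 s)).sub_const (2*h θ)).sub p3
      have hmono : MonotoneOn r2 (Set.Icc 0 t) := by
        apply monotoneOn_of_deriv_nonneg (convex_Icc 0 t)
        · exact (Differentiable.continuous (fun s : ℝ => (hr2d s).differentiableAt)).continuousOn
        · intro s _
          exact ((hr2d s).differentiableAt).differentiableWithinAt
        · intro s hs
          rw [interior_Icc] at hs
          obtain ⟨hs0, hst⟩ := hs
          rw [(hr2d s).deriv]
          obtain ⟨q1, q2, q3, q4⟩ := hestpair s hs0 hst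
          have hεs : 0 ≤ ε * s := mul_nonneg hε.le hs0.le
          nlinarith
      have hr20 : r2 0 = 0 := by simp [hr2def]; ring
      have hmt := hmono (Set.left_mem_Icc.mpr ht0.le) (Set.right_mem_Icc.mpr ht0.le) ht0.le
      rw [hr20] at hmt
      simp only [hr2def] at hmt
      linarith
    · set r : ℝ → ℝ := fun s => h (θ+s) + h (θ-s) - 2*h θ - (a + 2*ε)*s^2 with hrdef
      have hrd : ∀ s : ℝ, HasDerivAt r
          (deriv h (θ+s) + -deriv h (θ-s) - (a + 2*ε)*(2*s)) s := by
        intro s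
        have p3 : HasDerivAt (fun s : ℝ => (a + 2*ε)*s^2) ((a + 2*ε)*(2*s)) s := by
          simpa using (hasDerivAt_pow 2 s).const_mul (a + 2*ε)
        exact (((p1 s).add (p2 s)).sub_const (2*h θ)).sub p3
      have hanti : AntitoneOn r (Set.Icc 0 t) := by
        apply antitoneOn_of_deriv_nonpos (convex_Icc 0 t)
        · exact (Differentiable.continuous (fun s : ℝ => (hrd s).differentiableAt)).continuousOn
        · intro s _
          exact ((hrd s).differentiableAt).differentiableWithinAt
        · intro s hs
          rw [interior_Icc] at hs
          obtain ⟨hs0, hst⟩ := hs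
          rw [(hrd s).deriv]
          obtain ⟨q1, q2, q3, q4⟩ := hestpair s hs0 hst
          have hεs : 0 ≤ ε * s := mul_nonneg hε.le hs0.le
          nlinarith
      have hr0 : r 0 = 0 := by simp [hrdef]; ring
      have hmt := hanti (Set.left_mem_Icc.mpr ht0.le) (Set.right_mem_Icc.mpr ht0.le) ht0.le
      rw [hr0] at hmt
      simp only [hrdef] at hmt
      linarith
  have hlb : 0 ≤ a + h θ := by
    have key : ∀ ε : ℝ, 0 < ε → -h θ ≤ a + ε := by
      intro ε hε
      obtain ⟨δ, hδpos, hq⟩ := hQ (ε/2) (by linarith)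
      have hev : ∀ᶠ t in nhdsWithin (0:ℝ) (Set.Ioi 0),
          -2 * h θ * ((1 - Real.cos t)/t^2) ≤ a + ε := by
        filter_upwards [Ioo_mem_nhdsGT_of_mem (Set.left_mem_Ico.mpr hδpos)] with t htI
        have h1 := (hq t htI).2
        rw [show a + 2*(ε/2) = a + ε by ring] at h1
        have h2 := hlow θ t
        have ht2 : (0:ℝ) < t^2 := by
          have := htI.1
          positivity
        rw [← mul_div_assoc, div_le_iff₀ ht2]
        nlinarith
      have hlim : Filter.Tendsto (fun t : ℝ => -2 * h θ * ((1 - Real.cos t)/t^2))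
          (nhdsWithin (0:ℝ) (Set.Ioi 0)) (nhds (-2 * h θ * (1/2))) := by
        apply (tendsto_one_sub_cos_div_sq.const_mul (-2 * h θ)).mono_left
        apply nhdsWithin_mono
        intro x hx
        exact Set.mem_compl_singleton_iff.mpr (ne_of_gt hx)
      have := le_of_tendsto hlim hev
      linarith
    have := le_of_forall_pos_le_add' key
    linarith
  have hub2 : a + h θ ≤ 1 := by
    have key : ∀ ε : ℝ, 0 < ε → a + h θ ≤ 1 + ε := by
      intro ε hε
      obtain ⟨δ, hδpos, hq⟩ := hQ (ε/2) (by linarith)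
      have hev : ∀ᶠ t in nhdsWithin (0:ℝ) (Set.Ioi 0),
          a - ε ≤ (2 - 2 * h θ) * ((1 - Real.cos t)/t^2) := by
        filter_upwards [Ioo_mem_nhdsGT_of_mem (Set.left_mem_Ico.mpr hδpos)] with t htI
        have h1 := (hq t htI).1
        rw [show a - 2*(ε/2) = a - ε by ring] at h1
        have h2 := hup θ t
        have ht2 : (0:ℝ) < t^2 := by
          have := htI.1
          positivity
        rw [← mul_div_assoc, le_div_iff₀ ht2]
        nlinarith
      have hlim : Filter.Tendsto (fun t : ℝ => (2 - 2 * h θ) * ((1 - Real.cos t)/t^2))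
          (nhdsWithin (0:ℝ) (Set.Ioi 0)) (nhds ((2 - 2 * h θ) * (1/2))) := by
        apply (tendsto_one_sub_cos_div_sq.const_mul (2 - 2 * h θ)).mono_left
        apply nhdsWithin_mono
        intro x hx
        exact Set.mem_compl_singleton_iff.mpr (ne_of_gt hx)
      have := ge_of_tendsto hlim hev
      linarith
    exact le_of_forall_pos_le_add' key
  exact ⟨hθd, hlb, hub2⟩
end

section
/- Let h : ℝ → ℝ be 2π-periodic, continuously differentiable with Lipschitz continuous derivative, satisfy h(θ+π) + h(θ) = 1 for all θ ∈ ℝ, and satisfy h''(θ) + h(θ) ≥ 0 for almost every θ ∈ ℝ. Then K = ⋂_{θ∈ℝ} {x ∈ ℝ² : x·u(θ) ≤ h(θ)} is a nonempty compact convex set of constant width 1 whose support function equals h. -/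
open Real MeasureTheory

open Filter
open scoped Topology


lemma ftc_lip {f : ℝ → ℝ} {L : NNReal} (hf : LipschitzWith L f) (a b : ℝ) :
    ∫ t in a..b, deriv f t = f b - f a := by
  have hcont : Continuous f := hf.continuous
  set F : ℕ → ℝ → ℝ := fun n t => ((n : ℝ) + 1) * (f (t + 1 / ((n : ℝ) + 1)) - f t) with hF
  have epos : ∀ n : ℕ, (0:ℝ) < 1 / ((n:ℝ) + 1) := by
    intro n; positivity
  have hae : ∀ᵐ t : ℝ, DifferentiableAt ℝ f t := hf.ae_differentiableAt
  -- pointwise convergence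
  have hlim : ∀ᵐ t : ℝ, Tendsto (fun n => F n t) atTop (𝓝 (deriv f t)) := by
    filter_upwards [hae] with t ht
    have hd := ht.hasDerivAt
    rw [hasDerivAt_iff_tendsto_slope] at hd
    have hseq : Tendsto (fun n : ℕ => t + 1 / ((n:ℝ) + 1)) atTop (𝓝[≠] t) := by
      rw [tendsto_nhdsWithin_iff]
      constructor
      · have h0 : Tendsto (fun n : ℕ => 1 / ((n:ℝ) + 1)) atTop (𝓝 0) :=
          tendsto_one_div_add_atTop_nhds_zero_nat
        simpa using (tendsto_const_nhds.add h0)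
      · exact Eventually.of_forall fun n => by
          simp only [Set.mem_compl_iff, Set.mem_singleton_iff]
          have := epos n; intro hq; linarith [hq]
    have := hd.comp hseq
    apply this.congr
    intro n
    have hne : (1 / ((n:ℝ) + 1)) ≠ 0 := ne_of_gt (epos n)
    simp only [Function.comp_apply, slope_def_field, hF]
    rw [div_eq_iff (by simpa using hne)]
    field_simp
    ring
  -- uniform bound
  have hbound : ∀ n t, |F n t| ≤ (L : ℝ) := by
    intro n t
    have hd : |f (t + 1 / ((n:ℝ) + 1)) - f t| ≤ (L : ℝ) * (1 / ((n:ℝ) + 1)) := by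
      have := hf.dist_le_mul (t + 1 / ((n:ℝ) + 1)) t
      rw [Real.dist_eq, Real.dist_eq] at this
      have h' : t + 1 / ((n:ℝ) + 1) - t = 1 / ((n:ℝ) + 1) := by ring
      rw [h', abs_of_pos (epos n)] at this
      exact this
    have hn1 : (0:ℝ) < (n:ℝ) + 1 := by positivity
    rw [hF]
    simp only [abs_mul, abs_of_pos hn1]
    calc ((n:ℝ) + 1) * |f (t + 1 / ((n:ℝ) + 1)) - f t| ≤ ((n:ℝ)+1) * ((L:ℝ) * (1 / ((n:ℝ) + 1))) := by
          exact mul_le_mul_of_nonneg_left hd hn1.le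
      _ = (L : ℝ) := by field_simp
  -- DCT
  have hDCT : Tendsto (fun n => ∫ t in a..b, F n t) atTop (𝓝 (∫ t in a..b, deriv f t)) := by
    apply intervalIntegral.tendsto_integral_filter_of_dominated_convergence
        (bound := fun _ => (L : ℝ))
    · exact Eventually.of_forall fun n =>
        (continuous_const.mul
          ((hcont.comp (continuous_id.add continuous_const)).sub hcont)).aestronglyMeasurable
    · exact Eventually.of_forall fun n => Eventually.of_forall fun t _ => by
        simpa using hbound n t
    · exact intervalIntegrable_const
    · filter_upwards [hlim] with t ht _ using ht
  -- compute limit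
  have key : ∀ (c : ℝ), Tendsto (fun n : ℕ => ((n:ℝ)+1) * ∫ t in c..(c + 1/((n:ℝ)+1)), f t)
      atTop (𝓝 (f c)) := by
    intro c
    have hbd : ∀ n : ℕ, |((n:ℝ)+1) * (∫ t in c..(c + 1/((n:ℝ)+1)), f t) - f c|
        ≤ (L : ℝ) * (1 / ((n:ℝ)+1)) := by
      intro n
      set e := 1 / ((n:ℝ)+1) with he
      have hepos := epos n
      have hconst : ∫ t in c..(c+e), (f c) = e * f c := by
        rw [intervalIntegral.integral_const, smul_eq_mul]; ring
      have hsub : ((n:ℝ)+1) * (∫ t in c..(c+e), f t) - f c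
          = ((n:ℝ)+1) * ∫ t in c..(c+e), (f t - f c) := by
        rw [intervalIntegral.integral_sub (hcont.intervalIntegrable _ _)
          (intervalIntegrable_const), hconst]
        have h5 : ((n:ℝ)+1) * e = 1 := by rw [he]; field_simp
        linear_combination (f c) * h5
      rw [hsub]
      have hnorm : |∫ t in c..(c+e), (f t - f c)| ≤ ((L:ℝ) * e) * |c + e - c| := by
        rw [← Real.norm_eq_abs]
        apply intervalIntegral.norm_integral_le_of_norm_le_const
        intro x hx
        rw [Set.uIoc_of_le (by linarith) ] at hx
        have h1 : |f x - f c| ≤ (L:ℝ) * |x - c| := by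
          have := hf.dist_le_mul x c
          rw [Real.dist_eq, Real.dist_eq] at this
          exact this
        have h2 : |x - c| ≤ e := by
          rw [abs_of_pos (by linarith [hx.1] : (0:ℝ) < x - c)]
          linarith [hx.2]
        rw [Real.norm_eq_abs]
        calc |f x - f c| ≤ (L:ℝ) * |x - c| := h1
          _ ≤ (L:ℝ) * e := mul_le_mul_of_nonneg_left h2 (by positivity)
      have habs : |c + e - c| = e := by rw [abs_of_pos (by linarith [hepos])]; ring_nf
      calc |((n:ℝ)+1) * ∫ t in c..(c+e), (f t - f c)|
          = ((n:ℝ)+1) * |∫ t in c..(c+e), (f t - f c)| := by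
            rw [abs_mul, abs_of_pos (by positivity : (0:ℝ) < (n:ℝ)+1)]
        _ ≤ ((n:ℝ)+1) * (((L:ℝ) * e) * e) := by
            apply mul_le_mul_of_nonneg_left _ (by positivity)
            calc |∫ t in c..(c+e), (f t - f c)| ≤ ((L:ℝ) * e) * |c + e - c| := hnorm
              _ = ((L:ℝ) * e) * e := by rw [habs]
        _ = (L:ℝ) * e := by
            have h5 : ((n:ℝ)+1) * e = 1 := by rw [he]; field_simp
            linear_combination ((L:ℝ) * e) * h5
    -- squeeze
    have h0 : Tendsto (fun n : ℕ => (L:ℝ) * (1/((n:ℝ)+1))) atTop (𝓝 0) := by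
      simpa using tendsto_one_div_add_atTop_nhds_zero_nat.const_mul (L:ℝ)
    have := squeeze_zero_norm (f := fun n : ℕ => (((n:ℝ)+1) * ∫ t in c..(c + 1/((n:ℝ)+1)), f t) - f c)
      (fun n => by rw [Real.norm_eq_abs]; exact hbd n) h0
    have h2 : Tendsto (fun n : ℕ => (((n:ℝ)+1) * ∫ t in c..(c + 1/((n:ℝ)+1)), f t) - f c + f c)
        atTop (𝓝 (0 + f c)) := this.add tendsto_const_nhds
    simpa using h2
  -- compute the integral of F n
  have hInt : ∀ n : ℕ, ∫ t in a..b, F n t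
      = ((n:ℝ)+1) * (∫ t in b..(b + 1/((n:ℝ)+1)), f t) - ((n:ℝ)+1) * (∫ t in a..(a + 1/((n:ℝ)+1)), f t) := by
    intro n
    set e := 1 / ((n:ℝ)+1) with he
    have hepos := epos n
    have hi : ∀ c d : ℝ, IntervalIntegrable f volume c d := fun c d => hcont.intervalIntegrable c d
    have h1 : ∫ t in a..b, F n t = ((n:ℝ)+1) * ((∫ t in a..b, f (t + e)) - ∫ t in a..b, f t) := by
      have hA : IntervalIntegrable (fun t => f (t + e)) volume a b :=
        (hcont.comp (continuous_id.add continuous_const)).intervalIntegrable a b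
      rw [← intervalIntegral.integral_sub hA (hi a b), ← intervalIntegral.integral_const_mul]
    have h2 : (∫ t in a..b, f (t + e)) = ∫ t in (a+e)..(b+e), f t :=
      intervalIntegral.integral_comp_add_right f e
    have h3 : (∫ t in a..(b+e), f t) = (∫ t in a..b, f t) + ∫ t in b..(b+e), f t :=
      (intervalIntegral.integral_add_adjacent_intervals (hi a b) (hi b _)).symm
    have h4 : (∫ t in a..(b+e), f t) = (∫ t in a..(a+e), f t) + ∫ t in (a+e)..(b+e), f t :=
      (intervalIntegral.integral_add_adjacent_intervals (hi a _) (hi _ _)).symm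
    rw [h1, h2]
    have : (∫ t in (a+e)..(b+e), f t) - (∫ t in a..b, f t)
        = (∫ t in b..(b+e), f t) - (∫ t in a..(a+e), f t) := by linarith
    rw [this]; ring
  have hlim2 : Tendsto (fun n => ∫ t in a..b, F n t) atTop (𝓝 (f b - f a)) := by
    apply Tendsto.congr (fun n => (hInt n).symm)
    exact (key b).sub (key a)
  exact tendsto_nhds_unique hDCT hlim2


/-- Product of bounded Lipschitz functions is Lipschitz. -/
lemma lipschitz_mul_bounded {f g : ℝ → ℝ} {Lf Lg : NNReal} {Bf Bg : ℝ}
    (hf : LipschitzWith Lf f) (hg : LipschitzWith Lg g)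
    (hBf : ∀ x, |f x| ≤ Bf) (hBg : ∀ x, |g x| ≤ Bg) :
    ∃ L : NNReal, LipschitzWith L (fun x => f x * g x) := by
  refine ⟨Real.toNNReal (Bf * (Lg : ℝ) + Bg * (Lf : ℝ)), LipschitzWith.of_dist_le_mul ?_⟩
  intro x y
  have h1 : dist (f x * g x) (f y * g y) ≤ |f x| * dist (g x) (g y) + |g y| * dist (f x) (f y) := by
    rw [Real.dist_eq, Real.dist_eq, Real.dist_eq]
    calc |f x * g x - f y * g y| = |f x * (g x - g y) + g y * (f x - f y)| := by ring_nf
      _ ≤ |f x * (g x - g y)| + |g y * (f x - f y)| := abs_add_le _ _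
      _ = |f x| * |g x - g y| + |g y| * |f x - f y| := by rw [abs_mul, abs_mul]
  have h2 : |f x| * dist (g x) (g y) ≤ Bf * ((Lg : ℝ) * dist x y) := by
    apply mul_le_mul (hBf x) (hg.dist_le_mul x y) dist_nonneg
    exact (abs_nonneg _).trans (hBf x)
  have h3 : |g y| * dist (f x) (f y) ≤ Bg * ((Lf : ℝ) * dist x y) := by
    apply mul_le_mul (hBg y) (hf.dist_le_mul x y) dist_nonneg
    exact (abs_nonneg _).trans (hBg y)
  have h4 : dist (f x * g x) (f y * g y) ≤ (Bf * (Lg : ℝ) + Bg * (Lf : ℝ)) * dist x y := by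
    calc dist (f x * g x) (f y * g y) ≤ _ + _ := h1
      _ ≤ Bf * ((Lg : ℝ) * dist x y) + Bg * ((Lf : ℝ) * dist x y) := add_le_add h2 h3
      _ = (Bf * (Lg : ℝ) + Bg * (Lf : ℝ)) * dist x y := by ring
  calc dist (f x * g x) (f y * g y) ≤ (Bf * (Lg : ℝ) + Bg * (Lf : ℝ)) * dist x y := h4
    _ ≤ (Real.toNNReal (Bf * (Lg : ℝ) + Bg * (Lf : ℝ)) : ℝ) * dist x y :=
        mul_le_mul_of_nonneg_right (Real.le_coe_toNNReal _) dist_nonneg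

/-- A continuous periodic function is bounded. -/
lemma periodic_bounded {f : ℝ → ℝ} (hf : Continuous f) (hp : Function.Periodic f (2 * Real.pi)) :
    ∃ M : ℝ, 0 ≤ M ∧ ∀ x, |f x| ≤ M := by
  have h2pi : (0:ℝ) < 2 * Real.pi := by positivity
  obtain ⟨C, hC⟩ := (isCompact_Icc (a := (0:ℝ)) (b := 2 * Real.pi)).exists_bound_of_continuousOn
    hf.continuousOn
  refine ⟨max C 0, le_max_right _ _, fun x => ?_⟩
  have hx : f x = f (x - ⌊x / (2 * Real.pi)⌋ * (2 * Real.pi)) := (hp.sub_int_mul_eq _).symm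
  rw [hx]
  have hmem : x - ⌊x / (2 * Real.pi)⌋ * (2 * Real.pi) ∈ Set.Icc (0:ℝ) (2 * Real.pi) :=
    ⟨Int.sub_floor_div_mul_nonneg x h2pi, (Int.sub_floor_div_mul_lt x h2pi).le⟩
  calc |f _| = ‖f (x - ⌊x / (2 * Real.pi)⌋ * (2 * Real.pi))‖ := (Real.norm_eq_abs _).symm
    _ ≤ C := hC _ hmem
    _ ≤ max C 0 := le_max_left _ _

lemma lipschitz_of_deriv_bound {f : ℝ → ℝ} (hd : Differentiable ℝ f) {B : ℝ}
    (hB : ∀ x, |deriv f x| ≤ B) : LipschitzWith (Real.toNNReal B) f := by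
  apply lipschitzWith_of_nnnorm_deriv_le hd
  intro x
  rw [← NNReal.coe_le_coe, coe_nnnorm, Real.norm_eq_abs, Real.coe_toNNReal']
  exact (hB x).trans (le_max_left _ _)

lemma hasDerivAt_cos_shift (b t : ℝ) :
    HasDerivAt (fun t => Real.cos (b - t)) (Real.sin (b - t)) t := by
  have := (Real.hasDerivAt_cos (b - t)).comp t ((hasDerivAt_id t).const_sub b)
  simpa [Function.comp_def] using this

lemma hasDerivAt_sin_shift (b t : ℝ) :
    HasDerivAt (fun t => Real.sin (b - t)) (-Real.cos (b - t)) t := by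
  have := (Real.hasDerivAt_sin (b - t)).comp t ((hasDerivAt_id t).const_sub b)
  simpa [Function.comp_def] using this

lemma duhamel {h : ℝ → ℝ} (hC1 : ContDiff ℝ 1 h) {L : NNReal} (hlip : LipschitzWith L (deriv h))
    {Bh Bh' : ℝ} (hBh : ∀ x, |h x| ≤ Bh) (hBh' : ∀ x, |deriv h x| ≤ Bh') (a b : ℝ) :
    h b - (h a * Real.cos (b - a) + deriv h a * Real.sin (b - a))
      = ∫ t in a..b, Real.sin (b - t) * (deriv (deriv h) t + h t) := by
  set f1 := deriv h with hf1def
  have hdiff : Differentiable ℝ h := hC1.differentiable one_ne_zero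
  have hf1cont : Continuous f1 := hC1.continuous_deriv le_rfl
  set Φ : ℝ → ℝ := fun t => h t * Real.cos (b - t) + f1 t * Real.sin (b - t) with hΦ
  -- Φ is Lipschitz
  have hhlip : LipschitzWith (Real.toNNReal Bh') h := lipschitz_of_deriv_bound hdiff hBh'
  have hcoslip : LipschitzWith 1 (fun t => Real.cos (b - t)) := by
    have hcd : Differentiable ℝ (fun t => Real.cos (b - t)) :=
      fun t => (hasDerivAt_cos_shift b t).differentiableAt
    have := lipschitz_of_deriv_bound hcd (B := 1) (fun x => by
      rw [(hasDerivAt_cos_shift b x).deriv]; exact Real.abs_sin_le_one _)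
    simpa using this
  have hsinlip : LipschitzWith 1 (fun t => Real.sin (b - t)) := by
    have hsd : Differentiable ℝ (fun t => Real.sin (b - t)) :=
      fun t => (hasDerivAt_sin_shift b t).differentiableAt
    have := lipschitz_of_deriv_bound hsd (B := 1) (fun x => by
      rw [(hasDerivAt_sin_shift b x).deriv, abs_neg]; exact Real.abs_cos_le_one _)
    simpa using this
  obtain ⟨L1, hL1⟩ := lipschitz_mul_bounded hhlip hcoslip hBh
    (fun x => Real.abs_cos_le_one _)
  obtain ⟨L2, hL2⟩ := lipschitz_mul_bounded hlip hsinlip hBh'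
    (fun x => Real.abs_sin_le_one _)
  have hΦlip : LipschitzWith (L1 + L2) Φ := hL1.add hL2
  -- a.e. derivative of Φ
  have hae : ∀ᵐ t : ℝ, DifferentiableAt ℝ f1 t := hlip.ae_differentiableAt
  have hderivΦ : ∀ᵐ t : ℝ, deriv Φ t = Real.sin (b - t) * (deriv f1 t + h t) := by
    filter_upwards [hae] with t ht
    have hh : HasDerivAt h (f1 t) t := (hdiff t).hasDerivAt
    have hf1 : HasDerivAt f1 (deriv f1 t) t := ht.hasDerivAt
    have htot : HasDerivAt Φ
        (f1 t * Real.cos (b - t) + h t * Real.sin (b - t)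
          + (deriv f1 t * Real.sin (b - t) + f1 t * -Real.cos (b - t))) t :=
      (hh.mul (hasDerivAt_cos_shift b t)).add (hf1.mul (hasDerivAt_sin_shift b t))
    rw [htot.deriv]
    ring
  have hftc := ftc_lip hΦlip a b
  have hcongr : (∫ t in a..b, deriv Φ t) = ∫ t in a..b, Real.sin (b - t) * (deriv f1 t + h t) :=
    intervalIntegral.integral_congr_ae (by filter_upwards [hderivΦ] with t ht _ using ht)
  have hΦb : Φ b = h b := by simp [hΦ]
  have hΦa : Φ a = h a * Real.cos (b - a) + f1 a * Real.sin (b - a) := rfl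
  rw [← hΦb, ← hΦa, ← hftc, hcongr]

lemma integral_sin_factor_nonneg {g : ℝ → ℝ} (hg : ∀ᵐ t : ℝ, 0 ≤ g t) {a b : ℝ}
    (hd : |b - a| ≤ Real.pi) :
    0 ≤ ∫ t in a..b, Real.sin (b - t) * g t := by
  rcases le_total a b with hab | hab
  · apply intervalIntegral.integral_nonneg_of_ae_restrict hab
    filter_upwards [ae_restrict_of_ae hg, ae_restrict_mem measurableSet_Icc] with t ht hmem
    apply mul_nonneg _ ht
    apply Real.sin_nonneg_of_nonneg_of_le_pi
    · linarith [hmem.2]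
    · have : b - a ≤ Real.pi := le_of_abs_le hd
      linarith [hmem.1]
  · have hneg : 0 ≤ ∫ t in b..a, -(Real.sin (b - t) * g t) := by
      apply intervalIntegral.integral_nonneg_of_ae_restrict hab
      filter_upwards [ae_restrict_of_ae hg, ae_restrict_mem measurableSet_Icc] with t ht hmem
      rw [neg_mul_eq_neg_mul]
      apply mul_nonneg _ ht
      rw [neg_nonneg]
      apply Real.sin_nonpos_of_nonpos_of_neg_pi_le
      · linarith [hmem.1]
      · have : -(Real.pi) ≤ b - a := neg_le_of_abs_le hd
        linarith [hmem.2]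
    rw [intervalIntegral.integral_neg] at hneg
    rw [intervalIntegral.integral_symm]
    linarith

lemma support_ineq {h : ℝ → ℝ} (hper : Function.Periodic h (2 * Real.pi))
    (hC1 : ContDiff ℝ 1 h) {L : NNReal} (hlip : LipschitzWith L (deriv h))
    {Bh Bh' : ℝ} (hBh : ∀ x, |h x| ≤ Bh) (hBh' : ∀ x, |deriv h x| ≤ Bh')
    (hconvex : ∀ᵐ θ : ℝ, 0 ≤ deriv (deriv h) θ + h θ) (θ₀ θ : ℝ) :
    h θ₀ * Real.cos (θ - θ₀) + deriv h θ₀ * Real.sin (θ - θ₀) ≤ h θ := by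
  have hπ : (0:ℝ) < Real.pi := Real.pi_pos
  set n : ℤ := round ((θ - θ₀) / (2 * Real.pi)) with hn
  set θ' : ℝ := θ - n * (2 * Real.pi) with hθ'
  have hdist : |θ' - θ₀| ≤ Real.pi := by
    have h1 : |(θ - θ₀) / (2 * Real.pi) - n| ≤ 1 / 2 := abs_sub_round _
    have h2 : θ' - θ₀ = ((θ - θ₀) / (2 * Real.pi) - n) * (2 * Real.pi) := by
      field_simp [hθ']; ring
    rw [h2, abs_mul, abs_of_pos (by positivity : (0:ℝ) < 2 * Real.pi)]
    calc |(θ - θ₀) / (2 * Real.pi) - ↑n| * (2 * Real.pi) ≤ (1/2) * (2 * Real.pi) := by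
          apply mul_le_mul_of_nonneg_right h1 (by positivity)
      _ = Real.pi := by ring
  have hh : h θ = h θ' := (hper.sub_int_mul_eq n).symm
  have harg : θ - θ₀ = (θ' - θ₀) + n * (2 * Real.pi) := by rw [hθ']; ring
  have hcos : Real.cos (θ - θ₀) = Real.cos (θ' - θ₀) := by
    rw [harg, Real.cos_add_int_mul_two_pi]
  have hsin : Real.sin (θ - θ₀) = Real.sin (θ' - θ₀) := by
    rw [harg, Real.sin_add_int_mul_two_pi]
  rw [hh, hcos, hsin]
  have hduh := duhamel hC1 hlip hBh hBh' θ₀ θ'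
  have hnn : 0 ≤ ∫ t in θ₀..θ', Real.sin (θ' - t) * (deriv (deriv h) t + h t) :=
    integral_sin_factor_nonneg hconvex hdist
  linarith


lemma inner_u (x : EuclideanSpace ℝ (Fin 2)) (θ : ℝ) :
    (inner ℝ x (u θ) : ℝ) = x 0 * Real.cos θ + x 1 * Real.sin θ := by
  simp [u, PiLp.inner_apply, Fin.sum_univ_two, RCLike.inner_apply]
  ring

/-- The supporting point of the convex body in direction `θ₀`. -/
noncomputable def ptK (h : ℝ → ℝ) (θ₀ : ℝ) : EuclideanSpace ℝ (Fin 2) :=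
  WithLp.toLp 2 ![h θ₀ * Real.cos θ₀ - deriv h θ₀ * Real.sin θ₀,
    h θ₀ * Real.sin θ₀ + deriv h θ₀ * Real.cos θ₀]

lemma inner_ptK (h : ℝ → ℝ) (θ₀ θ : ℝ) :
    (inner ℝ (ptK h θ₀) (u θ) : ℝ)
      = h θ₀ * Real.cos (θ - θ₀) + deriv h θ₀ * Real.sin (θ - θ₀) := by
  rw [inner_u, Real.cos_sub, Real.sin_sub]
  show (ptK h θ₀) 0 * Real.cos θ + (ptK h θ₀) 1 * Real.sin θ = _
  simp only [ptK, WithLp.ofLp_toLp, Matrix.cons_val_zero, Matrix.cons_val_one, Matrix.head_cons]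
  ring

/-- If `h ∈ C^{1,1}(S¹)` satisfies `h(θ+π)+h(θ)=1` for all `θ` and `h''+h ≥ 0` a.e.,
then `K = ⋂_θ {x : x · u(θ) ≤ h(θ)}` is a nonempty compact convex set of constant
width 1 with support function `h`. -/
theorem C11_function_is_support_function_of_constant_width (h : ℝ → ℝ)
    (hper : Function.Periodic h (2 * π)) (hC1 : ContDiff ℝ 1 h)
    (hlip : ∃ L : NNReal, LipschitzWith L (deriv h))
    (hwidth : ∀ θ : ℝ, h (θ + π) + h θ = 1)
    (hconvex : ∀ᵐ θ : ℝ, 0 ≤ deriv (deriv h) θ + h θ) :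
    (⋂ θ : ℝ, {x : EuclideanSpace ℝ (Fin 2) | (inner ℝ x (u θ) : ℝ) ≤ h θ}).Nonempty ∧
    IsCompact (⋂ θ : ℝ, {x : EuclideanSpace ℝ (Fin 2) | (inner ℝ x (u θ) : ℝ) ≤ h θ}) ∧
    Convex ℝ (⋂ θ : ℝ, {x : EuclideanSpace ℝ (Fin 2) | (inner ℝ x (u θ) : ℝ) ≤ h θ}) ∧
    IsSupportFn (⋂ θ : ℝ, {x : EuclideanSpace ℝ (Fin 2) | (inner ℝ x (u θ) : ℝ) ≤ h θ}) h := by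
  obtain ⟨L, hlip⟩ := hlip
  set K := ⋂ θ : ℝ, {x : EuclideanSpace ℝ (Fin 2) | (inner ℝ x (u θ) : ℝ) ≤ h θ} with hK
  have hcont : Continuous h := hC1.continuous
  obtain ⟨Bh, hBh0, hBh⟩ := periodic_bounded hcont hper
  have hderivper : Function.Periodic (deriv h) (2 * π) := by
    intro x
    have hfun : (fun y => h (y + 2 * π)) = h := funext fun y => hper y
    calc deriv h (x + 2 * π) = deriv (fun y => h (y + 2 * π)) x :=
          (deriv_comp_add_const h (2 * π) x).symm
      _ = deriv h x := by rw [hfun]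
  obtain ⟨Bh', hBh'0, hBh'⟩ := periodic_bounded (hC1.continuous_deriv le_rfl) hderivper
  have hsupp : ∀ θ₀ θ : ℝ,
      h θ₀ * Real.cos (θ - θ₀) + deriv h θ₀ * Real.sin (θ - θ₀) ≤ h θ :=
    support_ineq hper hC1 hlip hBh hBh' hconvex
  have hmem : ∀ θ₀ : ℝ, ptK h θ₀ ∈ K := by
    intro θ₀
    rw [hK, Set.mem_iInter]
    intro θ
    rw [Set.mem_setOf_eq, inner_ptK]
    exact hsupp θ₀ θ
  have hval : ∀ θ : ℝ, (inner ℝ (ptK h θ) (u θ) : ℝ) = h θ := by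
    intro θ
    rw [inner_ptK]
    simp
  have hle : ∀ x ∈ K, ∀ θ : ℝ, (inner ℝ x (u θ) : ℝ) ≤ h θ := by
    intro x hx θ
    exact Set.mem_iInter.1 hx θ
  refine ⟨⟨ptK h 0, hmem 0⟩, ?_, ?_, ?_⟩
  · -- compact
    have hclosed : IsClosed K := isClosed_iInter fun θ =>
      isClosed_le (Continuous.inner continuous_id continuous_const) continuous_const
    have hsub : K ⊆ Metric.closedBall 0 (2 * Bh + 2) := by
      intro x hx
      have h0 := hle x hx 0
      have hπ := hle x hx π
      have h2 := hle x hx (π / 2)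
      have h3 := hle x hx (-(π / 2))
      rw [inner_u] at h0 hπ h2 h3
      simp only [Real.cos_zero, Real.sin_zero, Real.cos_pi, Real.sin_pi, Real.cos_pi_div_two,
        Real.sin_pi_div_two, Real.cos_neg, Real.sin_neg] at h0 hπ h2 h3
      have hx0 : |x 0| ≤ Bh := by
        rw [abs_le]; constructor
        · linarith [(abs_le.1 (hBh π)).2]
        · linarith [(abs_le.1 (hBh 0)).2]
      have hx1 : |x 1| ≤ Bh := by
        rw [abs_le]; constructor
        · linarith [(abs_le.1 (hBh (-(π/2)))).2]
        · linarith [(abs_le.1 (hBh (π/2))).2]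
      rw [Metric.mem_closedBall, dist_zero_right]
      rw [EuclideanSpace.norm_eq]
      have hsum : ∑ i : Fin 2, ‖x i‖ ^ 2 = |x 0| ^ 2 + |x 1| ^ 2 := by
        rw [Fin.sum_univ_two, Real.norm_eq_abs, Real.norm_eq_abs]
      rw [hsum]
      have hle2 : |x 0| ^ 2 + |x 1| ^ 2 ≤ (2 * Bh + 2) ^ 2 := by
        nlinarith [abs_nonneg (x 0), abs_nonneg (x 1)]
      calc Real.sqrt (|x 0| ^ 2 + |x 1| ^ 2) ≤ Real.sqrt ((2 * Bh + 2) ^ 2) :=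
            Real.sqrt_le_sqrt hle2
        _ = 2 * Bh + 2 := Real.sqrt_sq (by linarith)
    exact (isCompact_closedBall 0 (2 * Bh + 2)).of_isClosed_subset hclosed hsub
  · -- convex
    apply convex_iInter
    intro θ
    apply convex_halfSpace_le
    exact ⟨fun a b => inner_add_left a b _, fun c a => real_inner_smul_left a _ c⟩
  · -- support function
    intro θ
    constructor
    · exact ⟨ptK h θ, hmem θ, hval θ⟩
    · rintro y ⟨x, hx, rfl⟩
      exact hle x hx θ
end
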